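/- Let k be a rational number such that the Weierstrass curve E_k : Y^2 = X^3 + (k^2 - 5k + 8)X^2 + (-2k^2 + 5k + 4)(4-k)X + (k^2 + k)(4-k)^2 is nonsingular, i.e., has nonzero discriminant. Then the point S = (4-k, 16-4k) lies on E_k, and in the group of points of E_k one has 4 • S = O (S is a torsion point of order dividing 4), while S ≠ O. -/

import Mathlib

open WeierstrassCurve

/-- On the nonsingular Weierstrass curve
`E_k : Y² = X³ + (k²-5k+8)X² + (-2k²+5k+4)(4-k)X + (k²+k)(4-k)²` over `ℚ`, the point
`S = (4-k, 16-4k)` lies on the curve and is a nonzero torsion point with `4 • S = 0`. -/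
theorem S_is_four_torsion_on_Ek (k : ℚ)
    (E : WeierstrassCurve.Affine ℚ)
    (hE : E = { a₁ := 0, a₂ := k ^ 2 - 5 * k + 8,
                a₃ := 0, a₄ := (-2 * k ^ 2 + 5 * k + 4) * (4 - k),
                a₆ := (k ^ 2 + k) * (4 - k) ^ 2 })
    (hΔ : E.Δ ≠ 0) :
    ∃ h : E.Nonsingular (4 - k) (16 - 4 * k),
      4 • (WeierstrassCurve.Affine.Point.some _ _ h) = (0 : E.Point) ∧
        WeierstrassCurve.Affine.Point.some _ _ h ≠ (0 : E.Point) := by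
  subst hE
  set E : WeierstrassCurve.Affine ℚ :=
    { a₁ := 0, a₂ := k ^ 2 - 5 * k + 8, a₃ := 0,
      a₄ := (-2 * k ^ 2 + 5 * k + 4) * (4 - k),
      a₆ := (k ^ 2 + k) * (4 - k) ^ 2 } with hEdef
  -- k ≠ 4, else the discriminant vanishes
  have hk4 : k ≠ 4 := by
    rintro rfl
    apply hΔ
    simp only [hEdef, WeierstrassCurve.Δ, WeierstrassCurve.b₂, WeierstrassCurve.b₄,
      WeierstrassCurve.b₆, WeierstrassCurve.b₈]
    norm_num
  have hy0 : (16 : ℚ) - 4 * k ≠ 0 := by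
    intro h
    apply hk4
    linarith
  -- S satisfies the equation
  have heq : E.Equation (4 - k) (16 - 4 * k) := by
    rw [WeierstrassCurve.Affine.equation_iff]
    simp only [hEdef]
    ring
  have h : E.Nonsingular (4 - k) (16 - 4 * k) :=
    (WeierstrassCurve.Affine.equation_iff_nonsingular_of_Δ_ne_zero (W := E) hΔ).mp heq
  refine ⟨h, ?_, WeierstrassCurve.Affine.Point.some_ne_zero h⟩
  have hnegY : E.negY (4 - k) (16 - 4 * k) = -(16 - 4 * k) := by
    simp [WeierstrassCurve.Affine.negY, hEdef]
  have hy : (16 : ℚ) - 4 * k ≠ E.negY (4 - k) (16 - 4 * k) := by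
    rw [hnegY]
    intro hcon
    apply hy0
    linarith
  have hslope : E.slope (4 - k) (4 - k) (16 - 4 * k) (16 - 4 * k) = 4 - k := by
    rw [WeierstrassCurve.Affine.slope_of_Y_ne rfl hy, hnegY,
      div_eq_iff (by intro hc; apply hy0; linarith)]
    simp only [hEdef]
    ring
  have hdbl : WeierstrassCurve.Affine.Point.some _ _ h + WeierstrassCurve.Affine.Point.some _ _ h =
      WeierstrassCurve.Affine.Point.some _ _
        (WeierstrassCurve.Affine.nonsingular_add h h fun hxy => hy hxy.right) :=
    WeierstrassCurve.Affine.Point.add_self_of_Y_ne hy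
  have haddY : E.addY (4 - k) (4 - k) (16 - 4 * k)
      (E.slope (4 - k) (4 - k) (16 - 4 * k) (16 - 4 * k)) = 0 := by
    rw [hslope]
    simp only [WeierstrassCurve.Affine.addY, WeierstrassCurve.Affine.negAddY,
      WeierstrassCurve.Affine.addX, WeierstrassCurve.Affine.negY, hEdef]
    ring
  have hy2 : E.addY (4 - k) (4 - k) (16 - 4 * k)
        (E.slope (4 - k) (4 - k) (16 - 4 * k) (16 - 4 * k)) =
      E.negY (E.addX (4 - k) (4 - k) (E.slope (4 - k) (4 - k) (16 - 4 * k) (16 - 4 * k)))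
        (E.addY (4 - k) (4 - k) (16 - 4 * k)
          (E.slope (4 - k) (4 - k) (16 - 4 * k) (16 - 4 * k))) := by
    rw [haddY]
    simp [WeierstrassCurve.Affine.negY, hEdef]
  have hquad : WeierstrassCurve.Affine.Point.some _ _
        (WeierstrassCurve.Affine.nonsingular_add h h fun hxy => hy hxy.right) +
      WeierstrassCurve.Affine.Point.some _ _
        (WeierstrassCurve.Affine.nonsingular_add h h fun hxy => hy hxy.right) = 0 :=
    WeierstrassCurve.Affine.Point.add_self_of_Y_eq hy2
  have h4 : (4 : ℕ) • WeierstrassCurve.Affine.Point.some _ _ h =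
      (WeierstrassCurve.Affine.Point.some _ _ h + WeierstrassCurve.Affine.Point.some _ _ h) +
      (WeierstrassCurve.Affine.Point.some _ _ h + WeierstrassCurve.Affine.Point.some _ _ h) := by
    rw [show (4 : ℕ) = 2 + 2 from rfl, add_nsmul, two_nsmul]
  rw [h4, hdbl, hquad]
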